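/- Every n-vertex graph admitting a layered ℓ-separator (for some layering) has stack-number at most 5ℓ · log₂ n. -/

import Mathlib

/-- `lay` is a layering of `G`: every edge joins vertices in the same layer
or in consecutive layers. -/
def IsLayering {V : Type*} (G : SimpleGraph V) (lay : V → ℕ) : Prop :=
  ∀ u v : V, G.Adj u v →
    lay u = lay v ∨ lay u + 1 = lay v ∨ lay v + 1 = lay u

/-- `G` has a layered `ℓ`-separator with respect to the layering `lay`: every
subgraph `G'` of `G` contains a set `S` with at most `ℓ` vertices in each layer
such that every connected component of `G' − S` has at most `|V(G')| / 2`
vertices. -/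
def HasLayeredSeparator {V : Type*} (G : SimpleGraph V) (lay : V → ℕ) (ℓ : ℕ) : Prop :=
  ∀ G' : G.Subgraph, ∃ S ⊆ G'.verts,
    (∀ i : ℕ, (S ∩ {v | lay v = i}).ncard ≤ ℓ) ∧
    ∀ c : ((G'.deleteVerts S).coe).ConnectedComponent,
      2 * c.supp.ncard ≤ G'.verts.ncard

/-- `G` has a stack layout with `s` stacks: an injective position function on
the vertices and an assignment of the edges to `s` stacks such that no two
edges in the same stack cross. -/
def HasStackLayout {V : Type*} (G : SimpleGraph V) (s : ℕ) : Prop :=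
  ∃ (pos : V → ℕ) (f : Sym2 V → ℕ), Function.Injective pos ∧
    (∀ v w : V, G.Adj v w → f s(v, w) < s) ∧
    (∀ v w x y : V, G.Adj v w → G.Adj x y → f s(v, w) = f s(x, y) →
      ¬ (pos v < pos x ∧ pos x < pos w ∧ pos w < pos y))

/-- `G` has a queue layout with `q` queues: an injective position function on
the vertices and an assignment of the edges to `q` queues such that no two
edges in the same queue nest. -/
def HasQueueLayout {V : Type*} (G : SimpleGraph V) (q : ℕ) : Prop :=
  ∃ (pos : V → ℕ) (f : Sym2 V → ℕ), Function.Injective pos ∧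
    (∀ v w : V, G.Adj v w → f s(v, w) < q) ∧
    (∀ v w x y : V, G.Adj v w → G.Adj x y → f s(v, w) = f s(x, y) →
      ¬ (pos v < pos x ∧ pos x < pos y ∧ pos y < pos w))

private lemma euclid_unique {L A B i j : ℕ} (hi : i < L) (hj : j < L)
    (h : L * A + i = L * B + j) : A = B ∧ i = j := by
  have hAB : A = B := by
    rcases lt_trichotomy A B with hc | hc | hc
    · have h2 : L * (A + 1) ≤ L * B := Nat.mul_le_mul_left _ hc
      rw [Nat.mul_succ] at h2; omega
    · exact hc
    · have h2 : L * (B + 1) ≤ L * A := Nat.mul_le_mul_left _ hc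
      rw [Nat.mul_succ] at h2; omega
  subst hAB; omega

private lemma lex_sep : ∀ {x1 x2 y1 y2 : List ℕ}, List.Lex (· < ·) x1 x2 →
    x1.length = x2.length → x1 <+: y1 → x2 <+: y2 → List.Lex (· < ·) y1 y2 := by
  intro x1 x2 y1 y2 h
  induction h generalizing y1 y2 with
  | nil => intro hlen; simp at hlen
  | @cons a l1 l2 h ih =>
    intro hlen h1 h2
    rcases y1 with _ | ⟨b1, t1⟩
    · rw [List.prefix_nil] at h1; simp at h1
    rcases y2 with _ | ⟨b2, t2⟩
    · rw [List.prefix_nil] at h2; simp at h2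
    rw [List.cons_prefix_cons] at h1 h2
    obtain ⟨rfl, h1⟩ := h1
    obtain ⟨rfl, h2⟩ := h2
    exact List.Lex.cons (ih (by simpa using hlen) h1 h2)
  | @rel a l1 b l2 hab =>
    intro hlen h1 h2
    rcases y1 with _ | ⟨b1, t1⟩
    · rw [List.prefix_nil] at h1; simp at h1
    rcases y2 with _ | ⟨b2, t2⟩
    · rw [List.prefix_nil] at h2; simp at h2
    rw [List.cons_prefix_cons] at h1 h2
    obtain ⟨rfl, h1⟩ := h1
    obtain ⟨rfl, h2⟩ := h2
    exact List.Lex.rel hab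

private lemma exists_pos_of_strict {V : Type*} [Fintype V] (R : V → V → Prop)
    (hirr : ∀ a, ¬ R a a) (htr : ∀ a b c, R a b → R b c → R a c)
    (htot : ∀ a b, a ≠ b → R a b ∨ R b a) :
    ∃ pos : V → ℕ, Function.Injective pos ∧ ∀ a b, R a b ↔ pos a < pos b := by
  classical
  refine ⟨fun a => (Finset.univ.filter (fun u => R u a)).card, ?_, ?_⟩
  · intro a b h
    dsimp only at h
    by_contra hne
    rcases htot a b hne with hab | hba
    · have : (Finset.univ.filter (fun u => R u a)).card
          < (Finset.univ.filter (fun u => R u b)).card := by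
        apply Finset.card_lt_card
        rw [Finset.ssubset_def]
        constructor
        · intro u hu
          simp only [Finset.mem_filter, Finset.mem_univ, true_and] at *
          exact htr _ _ _ hu hab
        · intro hsub
          have ha : a ∈ Finset.univ.filter (fun u => R u b) := by
            simp [hab]
          have := hsub ha
          simp only [Finset.mem_filter, Finset.mem_univ, true_and] at this
          exact hirr a this
      omega
    · have : (Finset.univ.filter (fun u => R u b)).card
          < (Finset.univ.filter (fun u => R u a)).card := by
        apply Finset.card_lt_card
        rw [Finset.ssubset_def]
        constructor
        · intro u hu
          simp only [Finset.mem_filter, Finset.mem_univ, true_and] at *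
          exact htr _ _ _ hu hba
        · intro hsub
          have hb : b ∈ Finset.univ.filter (fun u => R u a) := by
            simp [hba]
          have := hsub hb
          simp only [Finset.mem_filter, Finset.mem_univ, true_and] at this
          exact hirr b this
      omega
  · have key : ∀ a b, R a b → (Finset.univ.filter (fun u => R u a)).card
        < (Finset.univ.filter (fun u => R u b)).card := by
      intro a b hab
      apply Finset.card_lt_card
      rw [Finset.ssubset_def]
      constructor
      · intro u hu
        simp only [Finset.mem_filter, Finset.mem_univ, true_and] at *
        exact htr _ _ _ hu hab
      · intro hsub
        have ha : a ∈ Finset.univ.filter (fun u => R u b) := by simp [hab]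
        have := hsub ha
        simp only [Finset.mem_filter, Finset.mem_univ, true_and] at this
        exact hirr a this
    intro a b
    dsimp only
    constructor
    · exact key a b
    · intro hlt
      by_contra hnr
      rcases eq_or_ne a b with rfl | hne
      · omega
      rcases htot a b hne with hab | hba
      · exact hnr hab
      · have := key b a hba; omega

private lemma exists_word {V : Type*} [Fintype V] (G : SimpleGraph V)
    (lay : V → ℕ) (ℓ : ℕ) (hsep : HasLayeredSeparator G lay ℓ) :
    ∀ N : ℕ, ∀ G' : G.Subgraph, G'.verts.ncard ≤ N →
    ∃ (word : V → List ℕ) (idx : V → ℕ),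
      (∀ v ∈ G'.verts, idx v < ℓ) ∧
      (∀ a ∈ G'.verts, ∀ b ∈ G'.verts,
        word a = word b → lay a = lay b → idx a = idx b → a = b) ∧
      (∀ a b : V, G'.Adj a b → word a <+: word b ∨ word b <+: word a) ∧
      (∀ a b : V, G'.Adj a b →
        2 ^ (min (word a).length (word b).length + 1) ≤ G'.verts.ncard) := by
  classical
  intro N
  induction N with
  | zero =>
    intro G' hcard
    have hfin : G'.verts.Finite := Set.toFinite _
    have hempty : G'.verts = ∅ := by
      rw [← Set.ncard_eq_zero hfin]; omega
    refine ⟨fun _ => [], fun _ => 0, ?_, ?_, ?_, ?_⟩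
    · intro v hv; rw [hempty] at hv; exact absurd hv (Set.notMem_empty v)
    · intro a ha; rw [hempty] at ha; exact absurd ha (Set.notMem_empty a)
    · intro a b hab
      have := G'.edge_vert hab
      rw [hempty] at this; exact absurd this (Set.notMem_empty a)
    · intro a b hab
      have := G'.edge_vert hab
      rw [hempty] at this; exact absurd this (Set.notMem_empty a)
  | succ N ih =>
    intro G' hcard
    obtain ⟨S, hSsub, hSlay, hScomp⟩ := hsep G'
    set G'' := G'.deleteVerts S with hG''
    -- component indexing
    obtain ⟨cidx, hcidx⟩ := exists_injective_nat (G''.coe.ConnectedComponent)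
    -- the induced subgraph on a component
    have hrec : ∀ c : G''.coe.ConnectedComponent,
        ∃ (word : V → List ℕ) (idx : V → ℕ),
          (∀ v ∈ (G'.induce (Subtype.val '' c.supp)).verts, idx v < ℓ) ∧
          (∀ a ∈ (G'.induce (Subtype.val '' c.supp)).verts,
            ∀ b ∈ (G'.induce (Subtype.val '' c.supp)).verts,
            word a = word b → lay a = lay b → idx a = idx b → a = b) ∧
          (∀ a b : V, (G'.induce (Subtype.val '' c.supp)).Adj a b →
            word a <+: word b ∨ word b <+: word a) ∧
          (∀ a b : V, (G'.induce (Subtype.val '' c.supp)).Adj a b →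
            2 ^ (min (word a).length (word b).length + 1)
              ≤ (G'.induce (Subtype.val '' c.supp)).verts.ncard) := by
      intro c
      apply ih
      rw [SimpleGraph.Subgraph.induce_verts,
        Set.ncard_image_of_injective _ Subtype.val_injective]
      have h2 := hScomp c
      have hpos : 0 < c.supp.ncard := by
        rw [Set.ncard_pos (Set.toFinite _)]
        obtain ⟨v, hv⟩ := c.exists_rep
        exact ⟨v, by rw [SimpleGraph.ConnectedComponent.mem_supp_iff]; exact hv⟩
      omega
    choose wc ic hc1 hc2 hc3 hc4 using hrec
    -- index function on separator vertices, per layer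
    have hSl : ∀ i : ℕ, ∃ g : V → ℕ,
        (∀ v ∈ S ∩ {v | lay v = i}, g v < ℓ) ∧
        (Set.InjOn g (S ∩ {v | lay v = i})) := by
      intro i
      have hfin : (S ∩ {v | lay v = i}).Finite := Set.toFinite _
      refine ⟨fun v => if h : v ∈ hfin.toFinset then (hfin.toFinset.equivFin ⟨v, h⟩ : ℕ)
        else 0, ?_, ?_⟩
      · intro v hv
        dsimp only
        have hv' : v ∈ hfin.toFinset := hfin.mem_toFinset.mpr hv
        rw [dif_pos hv']
        calc ((hfin.toFinset.equivFin ⟨v, hv'⟩ : Fin _) : ℕ)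
            < hfin.toFinset.card := (hfin.toFinset.equivFin ⟨v, hv'⟩).isLt
          _ ≤ ℓ := by rw [← Set.ncard_eq_toFinset_card _ hfin]; exact hSlay i
      · intro a ha b hb hab
        dsimp only at hab
        have ha' : a ∈ hfin.toFinset := hfin.mem_toFinset.mpr ha
        have hb' : b ∈ hfin.toFinset := hfin.mem_toFinset.mpr hb
        rw [dif_pos ha', dif_pos hb'] at hab
        have := hfin.toFinset.equivFin.injective
          (Fin.val_injective hab)
        exact congrArg Subtype.val this
    choose gS hgS1 hgS2 using hSl
    -- the global word and index functions
    refine ⟨fun v => if hv : v ∈ G''.verts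
        then cidx (G''.coe.connectedComponentMk ⟨v, hv⟩)
          :: wc (G''.coe.connectedComponentMk ⟨v, hv⟩) v
        else [],
      fun v => if hv : v ∈ G''.verts
        then ic (G''.coe.connectedComponentMk ⟨v, hv⟩) v
        else gS (lay v) v, ?_, ?_, ?_, ?_⟩
    -- membership in component-subgraph verts
    all_goals
      have hmemc : ∀ (v : V) (hv : v ∈ G''.verts),
          v ∈ (G'.induce (Subtype.val ''
            (G''.coe.connectedComponentMk ⟨v, hv⟩).supp)).verts := by
        intro v hv
        rw [SimpleGraph.Subgraph.induce_verts]
        exact ⟨⟨v, hv⟩, by rw [SimpleGraph.ConnectedComponent.mem_supp_iff], rfl⟩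
      have hSmem : ∀ v ∈ G'.verts, v ∉ G''.verts → v ∈ S := by
        intro v hv hnv
        rw [hG'', SimpleGraph.Subgraph.deleteVerts_verts] at hnv
        by_contra hS
        exact hnv ⟨hv, hS⟩
    · -- idx bound
      intro v hv
      dsimp only
      by_cases hv' : v ∈ G''.verts
      · rw [dif_pos hv']
        exact hc1 _ v (hmemc v hv')
      · rw [dif_neg hv']
        exact hgS1 (lay v) v ⟨hSmem v hv hv', rfl⟩
    · -- injectivity of (word, lay, idx)
      intro a ha b hb hw hl hi
      dsimp only at hw hi
      by_cases ha' : a ∈ G''.verts <;> by_cases hb' : b ∈ G''.verts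
      · rw [dif_pos ha', dif_pos hb'] at hw hi
        have hchead : cidx (G''.coe.connectedComponentMk ⟨a, ha'⟩)
            = cidx (G''.coe.connectedComponentMk ⟨b, hb'⟩) := by
          exact (List.cons.injEq _ _ _ _ ▸ hw).1
        have hceq := hcidx hchead
        rw [← hceq] at hw hi
        have htail : wc (G''.coe.connectedComponentMk ⟨a, ha'⟩) a
            = wc (G''.coe.connectedComponentMk ⟨a, ha'⟩) b :=
          (List.cons.injEq _ _ _ _ ▸ hw).2
        refine hc2 _ a (hmemc a ha') b ?_ htail hl hi
        rw [hceq]; exact hmemc b hb'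
      · rw [dif_pos ha', dif_neg hb'] at hw; simp at hw
      · rw [dif_neg ha', dif_pos hb'] at hw; simp at hw
      · rw [dif_neg ha', dif_neg hb'] at hi
        rw [← hl] at hi
        exact hgS2 (lay a) ⟨hSmem a ha ha', rfl⟩ ⟨hSmem b hb hb', hl.symm⟩ hi
    · -- prefix comparability on edges
      intro a b hab
      dsimp only
      by_cases ha' : a ∈ G''.verts
      · by_cases hb' : b ∈ G''.verts
        · -- same component
          have hadj'' : G''.Adj a b := by
            rw [hG'', SimpleGraph.Subgraph.deleteVerts_adj]
            have ha2 := ha'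
            have hb2 := hb'
            rw [hG'', SimpleGraph.Subgraph.deleteVerts_verts] at ha2 hb2
            exact ⟨ha2.1, ha2.2, hb2.1, hb2.2, hab⟩
          have hcoe : G''.coe.Adj ⟨a, ha'⟩ ⟨b, hb'⟩ := by
            rw [SimpleGraph.Subgraph.coe_adj]; exact hadj''
          have hceq : G''.coe.connectedComponentMk ⟨a, ha'⟩
              = G''.coe.connectedComponentMk ⟨b, hb'⟩ :=
            SimpleGraph.ConnectedComponent.eq.mpr hcoe.reachable
          have hma : a ∈ Subtype.val '' (G''.coe.connectedComponentMk ⟨a, ha'⟩).supp := by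
            exact ⟨⟨a, ha'⟩, by rw [SimpleGraph.ConnectedComponent.mem_supp_iff], rfl⟩
          have hmb : b ∈ Subtype.val '' (G''.coe.connectedComponentMk ⟨a, ha'⟩).supp := by
            refine ⟨⟨b, hb'⟩, ?_, rfl⟩
            rw [SimpleGraph.ConnectedComponent.mem_supp_iff]
            exact hceq.symm
          have hadjc : (G'.induce (Subtype.val ''
              (G''.coe.connectedComponentMk ⟨a, ha'⟩).supp)).Adj a b := by
            rw [SimpleGraph.Subgraph.induce_adj]
            exact ⟨hma, hmb, hab⟩
          rcases hc3 _ a b hadjc with h | h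
          · left
            rw [dif_pos ha', dif_pos hb', ← hceq]
            rw [List.cons_prefix_cons]
            exact ⟨rfl, h⟩
          · right
            rw [dif_pos ha', dif_pos hb', ← hceq]
            rw [List.cons_prefix_cons]
            exact ⟨rfl, h⟩
        · right; rw [dif_neg hb']; exact List.nil_prefix
      · left; rw [dif_neg ha']; exact List.nil_prefix
    · -- size bound on edges
      intro a b hab
      dsimp only
      have hane : a ≠ b := hab.adj_sub.ne
      have hver : 2 ≤ G'.verts.ncard := by
        rw [← Nat.lt_iff_add_one_le]
        change 1 < _
        rw [Set.one_lt_ncard (Set.toFinite _)]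
        exact ⟨a, G'.edge_vert hab, b, G'.edge_vert (G'.adj_symm hab), hane⟩
      by_cases ha' : a ∈ G''.verts
      · by_cases hb' : b ∈ G''.verts
        · -- same component, use recursive bound
          have hadj'' : G''.Adj a b := by
            rw [hG'', SimpleGraph.Subgraph.deleteVerts_adj]
            have ha2 := ha'
            have hb2 := hb'
            rw [hG'', SimpleGraph.Subgraph.deleteVerts_verts] at ha2 hb2
            exact ⟨ha2.1, ha2.2, hb2.1, hb2.2, hab⟩
          have hcoe : G''.coe.Adj ⟨a, ha'⟩ ⟨b, hb'⟩ := by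
            rw [SimpleGraph.Subgraph.coe_adj]; exact hadj''
          have hceq : G''.coe.connectedComponentMk ⟨a, ha'⟩
              = G''.coe.connectedComponentMk ⟨b, hb'⟩ :=
            SimpleGraph.ConnectedComponent.eq.mpr hcoe.reachable
          have hma : a ∈ Subtype.val '' (G''.coe.connectedComponentMk ⟨a, ha'⟩).supp := by
            exact ⟨⟨a, ha'⟩, by rw [SimpleGraph.ConnectedComponent.mem_supp_iff], rfl⟩
          have hmb : b ∈ Subtype.val '' (G''.coe.connectedComponentMk ⟨a, ha'⟩).supp := by
            refine ⟨⟨b, hb'⟩, ?_, rfl⟩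
            rw [SimpleGraph.ConnectedComponent.mem_supp_iff]
            exact hceq.symm
          have hadjc : (G'.induce (Subtype.val ''
              (G''.coe.connectedComponentMk ⟨a, ha'⟩).supp)).Adj a b := by
            rw [SimpleGraph.Subgraph.induce_adj]
            exact ⟨hma, hmb, hab⟩
          have h4 := hc4 _ a b hadjc
          have hsupp : (G'.induce (Subtype.val ''
              (G''.coe.connectedComponentMk ⟨a, ha'⟩).supp)).verts.ncard
              = (G''.coe.connectedComponentMk ⟨a, ha'⟩).supp.ncard := by
            rw [SimpleGraph.Subgraph.induce_verts]
            exact Set.ncard_image_of_injective _ Subtype.val_injective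
          rw [hsupp] at h4
          have h2 := hScomp (G''.coe.connectedComponentMk ⟨a, ha'⟩)
          rw [dif_pos ha', dif_pos hb', ← hceq]
          simp only [List.length_cons]
          rw [Nat.succ_min_succ]
          calc 2 ^ ((wc (G''.coe.connectedComponentMk ⟨a, ha'⟩) a).length
                ⊓ (wc (G''.coe.connectedComponentMk ⟨a, ha'⟩) b).length + 1 + 1)
              = 2 * 2 ^ ((wc (G''.coe.connectedComponentMk ⟨a, ha'⟩) a).length
                ⊓ (wc (G''.coe.connectedComponentMk ⟨a, ha'⟩) b).length + 1) := by
                rw [pow_succ]; ring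
            _ ≤ 2 * (G''.coe.connectedComponentMk ⟨a, ha'⟩).supp.ncard := by omega
            _ ≤ G'.verts.ncard := h2
        · rw [dif_neg hb']
          simp only [List.length_nil, Nat.min_zero]
          omega
      · rw [dif_neg ha']
        simp only [List.length_nil, Nat.zero_min]
        omega

private def wltP {V : Type*} (word : V → List ℕ) (idx : V → ℕ) (a b : V) : Prop :=
  List.Lex (· < ·) (word a) (word b) ∨ (word a = word b ∧ idx a < idx b)

private def desP {V : Type*} (lay : V → ℕ) (word : V → List ℕ) (idx : V → ℕ)
    (a b : V) : Prop :=
  (word a).length < (word b).length ∨ ((word a).length = (word b).length ∧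
    (lay a < lay b ∨ (lay a = lay b ∧ idx a ≤ idx b)))

private instance {V : Type*} (lay : V → ℕ) (word : V → List ℕ) (idx : V → ℕ)
    (a b : V) : Decidable (desP lay word idx a b) := by
  unfold desP; infer_instance

private def clsFn (p q : ℕ) : ℕ :=
  if q = p + 1 then (if p % 2 = 0 then 0 else 1)
  else if p = q + 1 then (if p % 2 = 0 then 2 else 3) else 4

private def valFn {V : Type*} (ℓ : ℕ) (lay : V → ℕ) (word : V → List ℕ)
    (idx : V → ℕ) (a b : V) : ℕ :=
  ℓ * (5 * (word a).length + clsFn (lay a) (lay b)) + idx a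

private def Ffn {V : Type*} (ℓ : ℕ) (lay : V → ℕ) (word : V → List ℕ)
    (idx : V → ℕ) (a b : V) : ℕ :=
  if desP lay word idx a b then valFn ℓ lay word idx a b else valFn ℓ lay word idx b a

private lemma clsFn_lt (p q : ℕ) : clsFn p q < 5 := by
  unfold clsFn; split_ifs <;> omega

private lemma Ffn_symm {V : Type*} (ℓ : ℕ) (lay : V → ℕ) (word : V → List ℕ)
    (idx : V → ℕ) (a b : V) : Ffn ℓ lay word idx a b = Ffn ℓ lay word idx b a := by
  unfold Ffn
  by_cases h1 : desP lay word idx a b <;> by_cases h2 : desP lay word idx b a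
  · rw [if_pos h1, if_pos h2]
    unfold desP at h1 h2
    have hlen : (word a).length = (word b).length := by omega
    have hlay : lay a = lay b := by omega
    have hidx : idx a = idx b := by omega
    unfold valFn
    rw [hlen, hlay, hidx]
  · rw [if_pos h1, if_neg h2]
  · rw [if_neg h1, if_pos h2]
  · exfalso; unfold desP at h1 h2; omega

private lemma wltP_trans {V : Type*} (word : V → List ℕ) (idx : V → ℕ) {a b c : V}
    (h1 : wltP word idx a b) (h2 : wltP word idx b c) : wltP word idx a c := by
  unfold wltP at *
  rcases h1 with h1 | ⟨e1, h1⟩ <;> rcases h2 with h2 | ⟨e2, h2⟩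
  · exact Or.inl (List.lex_trans (fun a b => lt_trans a b) h1 h2)
  · exact Or.inl (by rw [← e2]; exact h1)
  · exact Or.inl (by rw [e1]; exact h2)
  · exact Or.inr ⟨e1.trans e2, h1.trans h2⟩

private lemma wltP_irrefl {V : Type*} (word : V → List ℕ) (idx : V → ℕ) (a : V) :
    ¬ wltP word idx a a := by
  rintro (h | ⟨-, h⟩)
  · exact irrefl_of (List.Lex (· < ·)) _ h
  · omega

private lemma wltP_asymm {V : Type*} (word : V → List ℕ) (idx : V → ℕ) {a b : V}
    (h1 : wltP word idx a b) (h2 : wltP word idx b a) : False :=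
  wltP_irrefl word idx a (wltP_trans word idx h1 h2)

/-- Every `n`-vertex graph admitting a layered `ℓ`-separator has stack-number
at most `5ℓ · log₂ n`. -/
theorem stack_number_layered_separator {V : Type*} [Fintype V]
    (G : SimpleGraph V) (ℓ : ℕ) (lay : V → ℕ)
    (hlay : IsLayering G lay) (hsep : HasLayeredSeparator G lay ℓ) :
    ∃ s : ℕ, HasStackLayout G s ∧
      (s : ℝ) ≤ 5 * ℓ * Real.logb 2 (Fintype.card V) := by
  classical
  haveI htri : IsTrichotomous (List ℕ) (List.Lex (· < ·)) := List.Lex.trichotomous _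
  obtain ⟨word, idx, hJ1, hJ2, hJ3, hJ4⟩ := exists_word G lay ℓ hsep
    (Fintype.card V) ⊤
    (by rw [SimpleGraph.Subgraph.verts_top, Set.ncard_univ, Nat.card_eq_fintype_card])
  have hI1 : ∀ v : V, idx v < ℓ := fun v => hJ1 v (by simp)
  have hI2 : ∀ a b : V, word a = word b → lay a = lay b → idx a = idx b → a = b :=
    fun a b => hJ2 a (by simp) b (by simp)
  have hI3 : ∀ a b : V, G.Adj a b → word a <+: word b ∨ word b <+: word a :=
    fun a b hab => hJ3 a b (SimpleGraph.Subgraph.top_adj.mpr hab)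
  have hI4 : ∀ a b : V, G.Adj a b →
      2 ^ (min (word a).length (word b).length + 1) ≤ Fintype.card V := by
    intro a b hab
    have := hJ4 a b (SimpleGraph.Subgraph.top_adj.mpr hab)
    rwa [SimpleGraph.Subgraph.verts_top, Set.ncard_univ,
      Nat.card_eq_fintype_card] at this
  -- the global vertex ordering
  set R : V → V → Prop := fun a b => lay a < lay b ∨ (lay a = lay b ∧
    ((lay a % 2 = 0 ∧ wltP word idx a b) ∨ (lay a % 2 ≠ 0 ∧ wltP word idx b a)))
    with hR
  have hRirr : ∀ a, ¬ R a a := by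
    rintro a (h | ⟨-, ⟨-, h⟩ | ⟨-, h⟩⟩)
    · omega
    · exact wltP_irrefl word idx a h
    · exact wltP_irrefl word idx a h
  have hRtrans : ∀ a b c, R a b → R b c → R a c := by
    rintro a b c (h1 | ⟨e1, h1⟩) (h2 | ⟨e2, h2⟩)
    · exact Or.inl (h1.trans h2)
    · exact Or.inl (by omega)
    · exact Or.inl (by omega)
    · refine Or.inr ⟨e1.trans e2, ?_⟩
      rcases h1 with ⟨hp1, h1⟩ | ⟨hp1, h1⟩ <;> rcases h2 with ⟨hp2, h2⟩ | ⟨hp2, h2⟩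
      · exact Or.inl ⟨hp1, wltP_trans word idx h1 h2⟩
      · omega
      · omega
      · exact Or.inr ⟨hp1, wltP_trans word idx h2 h1⟩
  have hRtot : ∀ a b : V, a ≠ b → R a b ∨ R b a := by
    intro a b hne
    rcases lt_trichotomy (lay a) (lay b) with h | h | h
    · exact Or.inl (Or.inl h)
    · have hwlt : wltP word idx a b ∨ wltP word idx b a := by
        rcases trichotomous_of (List.Lex (· < ·)) (word a) (word b) with hw | hw | hw
        · exact Or.inl (Or.inl hw)
        · rcases lt_trichotomy (idx a) (idx b) with hi | hi | hi
          · exact Or.inl (Or.inr ⟨hw, hi⟩)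
          · exact absurd (hI2 a b hw h hi) hne
          · exact Or.inr (Or.inr ⟨hw.symm, hi⟩)
        · exact Or.inr (Or.inl hw)
      rcases hwlt with hw | hw
      · by_cases hp : lay a % 2 = 0
        · exact Or.inl (Or.inr ⟨h, Or.inl ⟨hp, hw⟩⟩)
        · exact Or.inr (Or.inr ⟨h.symm, Or.inr ⟨by omega, hw⟩⟩)
      · by_cases hp : lay a % 2 = 0
        · exact Or.inr (Or.inr ⟨h.symm, Or.inl ⟨by omega, hw⟩⟩)
        · exact Or.inl (Or.inr ⟨h, Or.inr ⟨hp, hw⟩⟩)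
    · exact Or.inr (Or.inl h)
  obtain ⟨pos, hposinj, hposiff⟩ := exists_pos_of_strict R hRirr hRtrans hRtot
  -- choice of the designated (shallow) endpoint of an edge
  have hchoice : ∀ a b : V, G.Adj a b → ∃ u o : V,
      ((u = a ∧ o = b) ∨ (u = b ∧ o = a)) ∧
      Ffn ℓ lay word idx a b = valFn ℓ lay word idx u o ∧
      word u <+: word o := by
    intro a b hab
    by_cases h : desP lay word idx a b
    · refine ⟨a, b, Or.inl ⟨rfl, rfl⟩, by rw [Ffn, if_pos h], ?_⟩
      have hle : (word a).length ≤ (word b).length := by unfold desP at h; omega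
      rcases hI3 a b hab with hp | hp
      · exact hp
      · have : word b = word a := hp.eq_of_length (le_antisymm hp.length_le hle)
        rw [this]
    · refine ⟨b, a, Or.inr ⟨rfl, rfl⟩, by rw [Ffn, if_neg h], ?_⟩
      have hle : (word b).length ≤ (word a).length := by unfold desP at h; omega
      rcases hI3 a b hab with hp | hp
      · have : word a = word b := hp.eq_of_length (le_antisymm hp.length_le hle)
        rw [this]
      · exact hp
  refine ⟨5 * ℓ * Nat.log 2 (Fintype.card V),
    ⟨pos, Sym2.lift ⟨Ffn ℓ lay word idx, Ffn_symm ℓ lay word idx⟩, hposinj, ?_, ?_⟩, ?_⟩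
  · -- stack bound
    intro v w hadj
    rw [Sym2.lift_mk]
    obtain ⟨u, o, huo, hF, hpre⟩ := hchoice v w hadj
    dsimp only
    rw [hF]
    have h4 : 2 ^ ((word u).length + 1) ≤ Fintype.card V := by
      have := hI4 v w hadj
      have hlen : (word u).length ≤ (word o).length := hpre.length_le
      rcases huo with ⟨rfl, rfl⟩ | ⟨rfl, rfl⟩
      · rwa [min_eq_left hlen] at this
      · rwa [min_comm, min_eq_left hlen] at this
    have hlog : (word u).length + 1 ≤ Nat.log 2 (Fintype.card V) := by
      have hn0 : Fintype.card V ≠ 0 := by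
        have : 0 < 2 ^ ((word u).length + 1) := Nat.pow_pos (by omega)
        omega
      exact (Nat.le_log_iff_pow_le one_lt_two hn0).mpr h4
    have hcls := clsFn_lt (lay u) (lay o)
    have hidx := hI1 u
    unfold valFn
    calc ℓ * (5 * (word u).length + clsFn (lay u) (lay o)) + idx u
        < ℓ * (5 * (word u).length + clsFn (lay u) (lay o)) + ℓ := by omega
      _ = ℓ * (5 * (word u).length + clsFn (lay u) (lay o) + 1) := by ring
      _ ≤ ℓ * (5 * ((word u).length + 1)) := by
          apply Nat.mul_le_mul_left; omega
      _ ≤ ℓ * (5 * Nat.log 2 (Fintype.card V)) := by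
          apply Nat.mul_le_mul_left; omega
      _ = 5 * ℓ * Nat.log 2 (Fintype.card V) := by ring
  · -- non-crossing
    intro v w x y hvw hxy hf hcr
    obtain ⟨h1, h2, h3⟩ := hcr
    rw [Sym2.lift_mk, Sym2.lift_mk] at hf
    dsimp only at hf
    have Rvx : R v x := (hposiff v x).mpr h1
    have Rxw : R x w := (hposiff x w).mpr h2
    have Rwy : R w y := (hposiff w y).mpr h3
    have Rvw : R v w := hRtrans _ _ _ Rvx Rxw
    have Rxy : R x y := hRtrans _ _ _ Rxw Rwy
    have Rvy : R v y := hRtrans _ _ _ Rvw Rwy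
    have hRne : ∀ a b : V, R a b → a ≠ b := fun a b hab he => hRirr b (he ▸ hab)
    have hRlay : ∀ a b : V, R a b → lay a ≤ lay b := by
      intro a b hab
      rcases hab with h | ⟨h, -⟩ <;> omega
    have lvx := hRlay _ _ Rvx
    have lxw := hRlay _ _ Rxw
    have lwy := hRlay _ _ Rwy
    have hRsame : ∀ a b : V, R a b → lay a = lay b →
        (lay a % 2 = 0 → wltP word idx a b) ∧ (lay a % 2 ≠ 0 → wltP word idx b a) := by
      intro a b hab he
      rcases hab with h | ⟨-, ⟨hp, h⟩ | ⟨hp, h⟩⟩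
      · omega
      · exact ⟨fun _ => h, fun h2 => absurd hp h2⟩
      · exact ⟨fun h2 => absurd h2 hp, fun _ => h⟩
    -- designated endpoints
    obtain ⟨u1, o1, hu1, hF1, hpre1⟩ := hchoice v w hvw
    obtain ⟨u2, o2, hu2, hF2, hpre2⟩ := hchoice x y hxy
    rw [hF1, hF2] at hf
    unfold valFn at hf
    obtain ⟨hA, hieq⟩ := euclid_unique (hI1 u1) (hI1 u2) hf
    obtain ⟨hlen, hcls⟩ := euclid_unique (clsFn_lt (lay u1) (lay o1))
      (clsFn_lt (lay u2) (lay o2)) hA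
    have hp1v : word u1 <+: word v := by
      rcases hu1 with ⟨hq, ho⟩ | ⟨hq, ho⟩
      · rw [hq]
      · rw [← ho]; exact hpre1
    have hp1w : word u1 <+: word w := by
      rcases hu1 with ⟨hq, ho⟩ | ⟨hq, ho⟩
      · rw [← ho]; exact hpre1
      · rw [hq]
    have hp2x : word u2 <+: word x := by
      rcases hu2 with ⟨hq, ho⟩ | ⟨hq, ho⟩
      · rw [hq]
      · rw [← ho]; exact hpre2
    have hp2y : word u2 <+: word y := by
      rcases hu2 with ⟨hq, ho⟩ | ⟨hq, ho⟩
      · rw [← ho]; exact hpre2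
      · rw [hq]
    have hune : u1 ≠ u2 := by
      rcases hu1 with ⟨hq1, -⟩ | ⟨hq1, -⟩ <;> rcases hu2 with ⟨hq2, -⟩ | ⟨hq2, -⟩ <;>
        rw [hq1, hq2]
      · exact hRne _ _ Rvx
      · exact hRne _ _ Rvy
      · exact fun he => hRne _ _ Rxw he.symm
      · exact hRne _ _ Rwy
    -- core contradictions
    have coreA : wltP word idx v x → wltP word idx w y →
        lay v = lay x → lay w = lay y → lay w = lay v + 1 → False := by
      intro hw1 hw2 he1 he2 hstep
      by_cases hp : lay v % 2 = 0
      · exact wltP_asymm word idx hw2 ((hRsame w y Rwy he2).2 (by omega))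
      · exact wltP_asymm word idx hw1 ((hRsame v x Rvx he1).2 hp)
    have coreA' : wltP word idx x v → wltP word idx y w →
        lay v = lay x → lay w = lay y → lay w = lay v + 1 → False := by
      intro hw1 hw2 he1 he2 hstep
      by_cases hp : lay v % 2 = 0
      · exact wltP_asymm word idx hw1 ((hRsame v x Rvx he1).1 hp)
      · exact wltP_asymm word idx hw2 ((hRsame w y Rwy he2).1 (by omega))
    have coreB1 : wltP word idx v x → wltP word idx w x →
        lay v = lay x → lay x = lay w → False := by
      intro hw1 hw2 he1 he2
      by_cases hp : lay v % 2 = 0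
      · exact wltP_asymm word idx hw2 ((hRsame x w Rxw he2).1 (by omega))
      · exact wltP_asymm word idx hw1 ((hRsame v x Rvx he1).2 hp)
    have coreB2 : wltP word idx x v → wltP word idx x w →
        lay v = lay x → lay x = lay w → False := by
      intro hw1 hw2 he1 he2
      by_cases hp : lay v % 2 = 0
      · exact wltP_asymm word idx hw1 ((hRsame v x Rvx he1).1 hp)
      · exact wltP_asymm word idx hw2 ((hRsame x w Rxw he2).2 (by omega))
    -- layer structure of the two edges
    have lvw : lay v ≤ lay w := le_trans lvx lxw
    have lxy : lay x ≤ lay y := le_trans lxw lwy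
    rcases hlay v w hvw with hd1 | hd1 | hd1
    rotate_right
    · omega
    -- case: e1 stays in its layer
    · rcases hlay x y hxy with hd2 | hd2 | hd2
      rotate_right
      · omega
      -- both edges stay in one layer, all four vertices in the same layer
      · have hall : lay v = lay x ∧ lay x = lay w ∧ lay w = lay y := by omega
        have hlu : lay u1 = lay u2 := by
          rcases hu1 with ⟨hq1, -⟩ | ⟨hq1, -⟩ <;> rcases hu2 with ⟨hq2, -⟩ | ⟨hq2, -⟩ <;>
            rw [hq1, hq2] <;> omega
        rcases trichotomous_of (List.Lex (· < ·)) (word u1) (word u2) with hLx | hEq | hLx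
        · exact coreB1 (Or.inl (lex_sep hLx hlen hp1v hp2x))
            (Or.inl (lex_sep hLx hlen hp1w hp2x)) hall.1 hall.2.1
        · exact hune (hI2 u1 u2 hEq hlu hieq)
        · exact coreB2 (Or.inl (lex_sep hLx hlen.symm hp2x hp1v))
            (Or.inl (lex_sep hLx hlen.symm hp2x hp1w)) hall.1 hall.2.1
      -- e2 goes up : class mismatch
      · have e1 : clsFn (lay u1) (lay o1) = 4 := by
          rcases hu1 with ⟨hq1, ho1⟩ | ⟨hq1, ho1⟩ <;> rw [hq1, ho1] <;> unfold clsFn <;>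
            rw [if_neg (by omega), if_neg (by omega)]
        have e2 : clsFn (lay u2) (lay o2) ≠ 4 := by
          rcases hu2 with ⟨hq2, ho2⟩ | ⟨hq2, ho2⟩
          · rw [hq2, ho2]; unfold clsFn; rw [if_pos hd2.symm]; split_ifs <;> omega
          · rw [hq2, ho2]; unfold clsFn; rw [if_neg (by omega), if_pos hd2.symm]
            split_ifs <;> omega
        omega
    -- case: e1 goes up a layer
    · rcases hlay x y hxy with hd2 | hd2 | hd2
      rotate_right
      · omega
      -- case: e2 stays in its layer (class mismatch)
      · have e2 : clsFn (lay u2) (lay o2) = 4 := by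
          rcases hu2 with ⟨hq2, ho2⟩ | ⟨hq2, ho2⟩ <;> rw [hq2, ho2] <;> unfold clsFn <;>
            rw [if_neg (by omega), if_neg (by omega)]
        have e1 : clsFn (lay u1) (lay o1) ≠ 4 := by
          rcases hu1 with ⟨hq1, ho1⟩ | ⟨hq1, ho1⟩
          · rw [hq1, ho1]; unfold clsFn; rw [if_pos hd1.symm]; split_ifs <;> omega
          · rw [hq1, ho1]; unfold clsFn; rw [if_neg (by omega), if_pos hd1.symm]
            split_ifs <;> omega
        omega
      -- case: e2 goes up a layer
      · rcases hu1 with ⟨hq1, ho1⟩ | ⟨hq1, ho1⟩ <;> rcases hu2 with ⟨hq2, ho2⟩ | ⟨hq2, ho2⟩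
        · -- u1 = v, u2 = x
          have e1 : clsFn (lay u1) (lay o1) = if lay v % 2 = 0 then 0 else 1 := by
            rw [hq1, ho1]; unfold clsFn; rw [if_pos hd1.symm]
          have e2 : clsFn (lay u2) (lay o2) = if lay x % 2 = 0 then 0 else 1 := by
            rw [hq2, ho2]; unfold clsFn; rw [if_pos hd2.symm]
          rw [e1, e2] at hcls
          have hvxl : lay v = lay x := by split_ifs at hcls <;> omega
          have hwyl : lay w = lay y := by omega
          rw [hq1, hq2] at hlen hieq
          rw [hq1] at hp1w; rw [hq2] at hp2y
          rcases trichotomous_of (List.Lex (· < ·)) (word v) (word x) with hLx | hEq | hLx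
          · exact coreA (Or.inl hLx) (Or.inl (lex_sep hLx hlen hp1w hp2y))
              hvxl hwyl hd1.symm
          · exact hRne _ _ Rvx (hI2 v x hEq hvxl hieq)
          · exact coreA' (Or.inl hLx) (Or.inl (lex_sep hLx hlen.symm hp2y hp1w))
              hvxl hwyl hd1.symm
        · -- u1 = v, u2 = y : impossible class mismatch
          have e1 : clsFn (lay u1) (lay o1) = if lay v % 2 = 0 then 0 else 1 := by
            rw [hq1, ho1]; unfold clsFn; rw [if_pos hd1.symm]
          have e2 : clsFn (lay u2) (lay o2) = if lay y % 2 = 0 then 2 else 3 := by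
            rw [hq2, ho2]; unfold clsFn; rw [if_neg (by omega), if_pos hd2.symm]
          rw [e1, e2] at hcls
          split_ifs at hcls <;> omega
        · -- u1 = w, u2 = x : impossible class mismatch
          have e1 : clsFn (lay u1) (lay o1) = if lay w % 2 = 0 then 2 else 3 := by
            rw [hq1, ho1]; unfold clsFn; rw [if_neg (by omega), if_pos hd1.symm]
          have e2 : clsFn (lay u2) (lay o2) = if lay x % 2 = 0 then 0 else 1 := by
            rw [hq2, ho2]; unfold clsFn; rw [if_pos hd2.symm]
          rw [e1, e2] at hcls
          split_ifs at hcls <;> omega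
        · -- u1 = w, u2 = y
          have e1 : clsFn (lay u1) (lay o1) = if lay w % 2 = 0 then 2 else 3 := by
            rw [hq1, ho1]; unfold clsFn; rw [if_neg (by omega), if_pos hd1.symm]
          have e2 : clsFn (lay u2) (lay o2) = if lay y % 2 = 0 then 2 else 3 := by
            rw [hq2, ho2]; unfold clsFn; rw [if_neg (by omega), if_pos hd2.symm]
          rw [e1, e2] at hcls
          have hwyl : lay w = lay y := by split_ifs at hcls <;> omega
          have hvxl : lay v = lay x := by omega
          rw [hq1, hq2] at hlen hieq
          rw [hq1] at hp1v; rw [hq2] at hp2x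
          rcases trichotomous_of (List.Lex (· < ·)) (word w) (word y) with hLx | hEq | hLx
          · exact coreA (Or.inl (lex_sep hLx hlen hp1v hp2x)) (Or.inl hLx)
              hvxl hwyl hd1.symm
          · exact hRne _ _ Rwy (hI2 w y hEq hwyl hieq)
          · exact coreA' (Or.inl (lex_sep hLx hlen.symm hp2x hp1v)) (Or.inl hLx)
              hvxl hwyl hd1.symm
  · -- the real bound
    have h1 : (Nat.log 2 (Fintype.card V) : ℝ) ≤ Real.logb 2 (Fintype.card V) :=
      Real.natLog_le_logb _ _
    push_cast
    calc (5 : ℝ) * ℓ * Nat.log 2 (Fintype.card V)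
        ≤ 5 * ℓ * Real.logb 2 (Fintype.card V) := by
          apply mul_le_mul_of_nonneg_left h1
          positivity
      _ = 5 * ℓ * Real.logb 2 (Fintype.card V) := rfl
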